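/- Let f be harmonic on a domain Ω ⊆ ℝᵐ (i.e., Δf = 0 componentwise). Then both Ψ₊^{φ,ψ}(f) and Ψ₋^{φ,ψ}(f) are simultaneously harmonic and (φ,ψ)-inframonogenic on Ω. -/

import Mathlib

open CliffordAlgebra

noncomputable section

/-- The quadratic form of `ℝ_{0,m}`: negative definite on `ℝ^m`. -/
abbrev Qf (m : ℕ) : QuadraticForm ℝ (Fin m → ℝ) :=
  QuadraticMap.weightedSumSquares ℝ (fun _ : Fin m => (-1 : ℝ))

/-- The real Clifford algebra `ℝ_{0,m}`. -/
abbrev Cl (m : ℕ) := CliffordAlgebra (Qf m)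

/-- A structural set: an orthonormal basis `ψ¹,…,ψᵐ` of `ℝᵐ`. -/
def IsStructuralSet {m : ℕ} (ψ : Fin m → (Fin m → ℝ)) : Prop :=
  ∀ i j, (∑ t, ψ i t * ψ j t) = if i = j then (1 : ℝ) else 0

/-- The ordered product `ψ_A = ψ^{j₁} ⋯ ψ^{j_k}` for `A = {j₁ < ⋯ < j_k}`. -/
def prodS {m : ℕ} (ψ : Fin m → (Fin m → ℝ)) (A : Finset (Fin m)) : Cl m :=
  ((A.sort (· ≤ ·)).map (fun i => ι (Qf m) (ψ i))).prod

/-- The operator `Ψ_k^{φ,ψ}(a) = Σ_{|A|=k} φ_A a ψ̂_A`. -/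
def PsiK {m : ℕ} (φ ψ : Fin m → (Fin m → ℝ)) (k : ℕ) (a : Cl m) : Cl m :=
  ∑ A ∈ Finset.univ.filter (fun A : Finset (Fin m) => A.card = k),
    prodS φ A * a * reverse (prodS ψ A)

/-- `Ψ₊ = Σ_{k even} Ψ_k`. -/
def PsiPlus {m : ℕ} (φ ψ : Fin m → (Fin m → ℝ)) (a : Cl m) : Cl m :=
  ∑ k ∈ (Finset.range (m + 1)).filter (fun k => Even k), PsiK φ ψ k a

/-- `Ψ₋ = Σ_{k odd} Ψ_k`. -/
def PsiMinus {m : ℕ} (φ ψ : Fin m → (Fin m → ℝ)) (a : Cl m) : Cl m :=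
  ∑ k ∈ (Finset.range (m + 1)).filter (fun k => Odd k), PsiK φ ψ k a

/-- `Ψ₁^{φ,ψ}(a) = Σⱼ φʲ a ψʲ`. -/
def Psi1 {m : ℕ} (φ ψ : Fin m → (Fin m → ℝ)) (a : Cl m) : Cl m :=
  ∑ j, ι (Qf m) (φ j) * a * ι (Qf m) (ψ j)

/-- The standard basis of `ℝᵐ`. -/
def stdB {m : ℕ} (i : Fin m) : Fin m → ℝ := Pi.single i 1

/-- The basis multivector `e_A`. -/
def eA {m : ℕ} (A : Finset (Fin m)) : Cl m := prodS stdB A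

/-- The element with coefficients `c` in the multivector basis. -/
def toCl {m : ℕ} (c : Finset (Fin m) → ℝ) : Cl m := ∑ A, c A • eA A

/-- The space `ℝ_{0,m}^{(k)}` of `k`-grade multivectors. -/
def gradeK (m k : ℕ) : Submodule ℝ (Cl m) :=
  Submodule.span ℝ {x | ∃ A : Finset (Fin m), A.card = k ∧ x = eA A}

/-- Coefficient functions of `ℝ_{0,m}`-valued maps. -/
abbrev Coef (m : ℕ) := Finset (Fin m) → ℝ

/-- The coefficients of the even part `f₊`. -/
def cEven {m : ℕ} (c : Coef m) : Coef m := fun A => if Even A.card then c A else 0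

/-- The coefficients of the odd part `f₋`. -/
def cOdd {m : ℕ} (c : Coef m) : Coef m := fun A => if Odd A.card then c A else 0

/-- The even part of a Clifford number. -/
def evenPart {m : ℕ} (a : Cl m) : Cl m :=
  (DirectSum.decompose (evenOdd (Qf m)) a 0 : evenOdd (Qf m) 0)

/-- The odd part of a Clifford number. -/
def oddPart {m : ℕ} (a : Cl m) : Cl m :=
  (DirectSum.decompose (evenOdd (Qf m)) a 1 : evenOdd (Qf m) 1)

/-- Partial derivative `∂F/∂xᵢ` of a coefficient function. -/
def pd {m : ℕ} (i : Fin m) (F : (Fin m → ℝ) → Coef m) : (Fin m → ℝ) → Coef m :=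
  fun x => fderiv ℝ F x (Pi.single i 1)

/-- The sandwich operator `φ∂[f]ψ∂ = Σᵢⱼ φⁱ (∂²f/∂xᵢ∂xⱼ) ψʲ` for `f = Σ_A F_A e_A`. -/
def sandwichD {m : ℕ} (φ ψ : Fin m → (Fin m → ℝ)) (F : (Fin m → ℝ) → Coef m)
    (x : Fin m → ℝ) : Cl m :=
  ∑ i, ∑ j, ι (Qf m) (φ i) * toCl (pd i (pd j F) x) * ι (Qf m) (ψ j)

/-- The operator `φ∂[ψ∂[f]] = Σᵢⱼ φⁱ ψʲ ∂²f/∂xᵢ∂xⱼ`. -/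
def ddD {m : ℕ} (φ ψ : Fin m → (Fin m → ℝ)) (F : (Fin m → ℝ) → Coef m)
    (x : Fin m → ℝ) : Cl m :=
  ∑ i, ∑ j, ι (Qf m) (φ i) * (ι (Qf m) (ψ j) * toCl (pd i (pd j F) x))

/-- The componentwise Laplacian `Δf = Σᵢ ∂²f/∂xᵢ²`. -/
def lapD {m : ℕ} (F : (Fin m → ℝ) → Coef m) (x : Fin m → ℝ) : Cl m :=
  ∑ i, toCl (pd i (pd i F) x)

section B0
variable {m : ℕ} {ψ : Fin m → (Fin m → ℝ)}

lemma Qf_apply (hψ : IsStructuralSet ψ) (i : Fin m) : Qf m (ψ i) = -1 := by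
  have hii : (∑ t, ψ i t * ψ i t) = 1 := by simpa using hψ i i
  rw [QuadraticMap.weightedSumSquares_apply]
  simp only [smul_eq_mul, neg_one_mul]
  rw [Finset.sum_neg_distrib, hii]

lemma iota_sq (hψ : IsStructuralSet ψ) (i : Fin m) :
    ι (Qf m) (ψ i) * ι (Qf m) (ψ i) = -1 := by
  rw [ι_sq_scalar, Qf_apply hψ, map_neg, map_one]

lemma iota_anticomm (hψ : IsStructuralSet ψ) {i j : Fin m} (h : i ≠ j) :
    ι (Qf m) (ψ i) * ι (Qf m) (ψ j) = -(ι (Qf m) (ψ j) * ι (Qf m) (ψ i)) := by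
  have h2 : QuadraticMap.polar (Qf m) (ψ i) (ψ j) = 0 := by
    have hii : (∑ t, ψ i t * ψ i t) = 1 := by simpa using hψ i i
    have hjj : (∑ t, ψ j t * ψ j t) = 1 := by simpa using hψ j j
    have hij : (∑ t, ψ i t * ψ j t) = 0 := by simpa [h] using hψ i j
    rw [QuadraticMap.polar, QuadraticMap.weightedSumSquares_apply,
      QuadraticMap.weightedSumSquares_apply, QuadraticMap.weightedSumSquares_apply]
    simp only [smul_eq_mul, Pi.add_apply, neg_one_mul]
    have key : ∀ x : Fin m, -((ψ i x + ψ j x) * (ψ i x + ψ j x)) =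
        -(ψ i x * ψ i x) + (-(ψ j x * ψ j x) + -2 * (ψ i x * ψ j x)) := fun x => by ring
    rw [Finset.sum_congr rfl fun x _ => key x, Finset.sum_add_distrib, Finset.sum_add_distrib,
      ← Finset.mul_sum, Finset.sum_neg_distrib, Finset.sum_neg_distrib, hii, hjj, hij]
    ring
  have := ι_mul_ι_add_swap (Q := Qf m) (ψ i) (ψ j)
  rw [h2, map_zero] at this
  exact eq_neg_of_add_eq_zero_left this
section Flip
variable {m : ℕ}

def flp (i : Fin m) (A : Finset (Fin m)) : Finset (Fin m) :=
  if i ∈ A then A.erase i else insert i A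

def sg (i : Fin m) (A : Finset (Fin m)) : ℝ :=
  (if i ∈ A then -1 else 1) * (-1) ^ ((A.filter (· < i)).card)

lemma mem_flp_self {i : Fin m} {A : Finset (Fin m)} : i ∈ flp i A ↔ i ∉ A := by
  unfold flp; split <;> simp [*]

lemma mem_flp_ne {i j : Fin m} (h : i ≠ j) {A : Finset (Fin m)} : i ∈ flp j A ↔ i ∈ A := by
  unfold flp; split <;> simp [Finset.mem_erase, Finset.mem_insert, h]

lemma flp_flp_self (i : Fin m) (A : Finset (Fin m)) : flp i (flp i A) = A := by
  unfold flp
  by_cases h : i ∈ A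
  · simp [h, Finset.insert_erase h]
  · simp [h, Finset.erase_insert h]

lemma flp_comm {i j : Fin m} (h : i ≠ j) (A : Finset (Fin m)) :
    flp i (flp j A) = flp j (flp i A) := by
  unfold flp
  by_cases hi : i ∈ A <;> by_cases hj : j ∈ A <;>
    simp only [hi, hj, h, h.symm, if_pos, if_neg, Finset.mem_erase, Finset.mem_insert,
      if_true, if_false, ne_eq, not_false_eq_true, and_true, and_false, or_false, false_or,
      not_true, not_and, true_and] <;>
  first
  | rfl
  | (ext t; simp only [Finset.mem_erase, Finset.mem_insert];
     rcases eq_or_ne t i with rfl | hti <;> rcases eq_or_ne t j with rfl | htj <;> simp_all)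

lemma card_flp_parity (i : Fin m) (A : Finset (Fin m)) :
    Even (flp i A).card ↔ ¬ Even A.card := by
  unfold flp
  by_cases h : i ∈ A
  · rw [if_pos h, Finset.card_erase_of_mem h]
    have h1 : 1 ≤ A.card := Finset.card_pos.2 ⟨i, h⟩
    rw [← Nat.succ_pred_eq_of_pos h1, Nat.even_add_one]
    simp
  · rw [if_neg h, Finset.card_insert_of_notMem h, Nat.even_add_one]

lemma sg_mul_self (i : Fin m) (A : Finset (Fin m)) : sg i A * sg i A = 1 := by
  unfold sg
  split <;> ring_nf <;> rw [pow_mul', neg_one_sq, one_pow]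
end Flip
section MulProd
variable {m : ℕ} {ψ : Fin m → (Fin m → ℝ)}

lemma prodS_empty : prodS ψ ∅ = 1 := by
  simp [prodS, Finset.sort_empty]

lemma prodS_insert_min {a : Fin m} {A : Finset (Fin m)} (h₁ : ∀ b ∈ A, a ≤ b) (h₂ : a ∉ A) :
    prodS ψ (insert a A) = ι (Qf m) (ψ a) * prodS ψ A := by
  rw [prodS, prodS, Finset.sort_insert (· ≤ ·) h₁ h₂, List.map_cons, List.prod_cons]

lemma sg_insert_lt {a i : Fin m} {A : Finset (Fin m)} (ha : a < i) (haA : a ∉ A) :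
    sg i (insert a A) = -(sg i A) := by
  unfold sg
  have h1 : (insert a A).filter (· < i) = insert a (A.filter (· < i)) := by
    rw [Finset.filter_insert, if_pos ha]
  have h2 : a ∉ A.filter (· < i) := fun h => haA (Finset.mem_filter.1 h).1
  have hne : i ≠ a := fun h => absurd ha (by rw [h]; exact lt_irrefl a)
  have h3 : i ∈ insert a A ↔ i ∈ A := by
    simp [Finset.mem_insert, hne]
  rw [h1, Finset.card_insert_of_notMem h2, pow_succ]
  by_cases h : i ∈ A <;> simp [h, h3] <;> ring

lemma flp_insert_ne {a i : Fin m} {A : Finset (Fin m)} (h : i ≠ a) :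
    flp i (insert a A) = insert a (flp i A) := by
  unfold flp
  by_cases hi : i ∈ A
  · rw [if_pos (Finset.mem_insert_of_mem hi), if_pos hi, Finset.erase_insert_of_ne h.symm]
  · have : i ∉ insert a A := by simp [Finset.mem_insert, h, hi]
    rw [if_neg this, if_neg hi, Finset.insert_comm]

lemma mul_prodS (hψ : IsStructuralSet ψ) :
    ∀ (A : Finset (Fin m)) (i : Fin m),
      ι (Qf m) (ψ i) * prodS ψ A = sg i A • prodS ψ (flp i A) := by
  intro A
  induction A using Finset.strongInduction with
  | _ A ih =>
  intro i
  rcases A.eq_empty_or_nonempty with rfl | hA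
  · have h1 : flp i (∅ : Finset (Fin m)) = {i} := by simp [flp]
    have h2 : sg i (∅ : Finset (Fin m)) = 1 := by simp [sg]
    rw [h1, h2, one_smul, prodS_empty, mul_one, show ({i} : Finset (Fin m)) = insert i ∅ from rfl,
      prodS_insert_min (by simp) (by simp), prodS_empty, mul_one]
  · set a₀ := A.min' hA with ha₀
    have ha₀A : a₀ ∈ A := A.min'_mem hA
    set A₀ := A.erase a₀ with hA₀def
    have hA₀ : a₀ ∉ A₀ := Finset.notMem_erase _ _
    have hmin : ∀ b ∈ A₀, a₀ ≤ b := fun b hb => A.min'_le b (Finset.mem_of_mem_erase hb)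
    have hAeq : A = insert a₀ A₀ := (Finset.insert_erase ha₀A).symm
    have hsub : A₀ ⊂ A := Finset.erase_ssubset ha₀A
    have hprod : prodS ψ A = ι (Qf m) (ψ a₀) * prodS ψ A₀ := by
      rw [hAeq]; exact prodS_insert_min hmin hA₀
    rcases lt_trichotomy i a₀ with hlt | heq | hgt
    · -- i < a₀ : i ∉ A
      have hiA : i ∉ A := fun h => absurd (A.min'_le i h) (not_le.2 hlt)
      have hflp : flp i A = insert i A := if_neg hiA
      have hsg : sg i A = 1 := by
        unfold sg
        have : A.filter (· < i) = ∅ := by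
          apply Finset.filter_eq_empty_iff.2
          intro b hb
          exact not_lt.2 (le_of_lt (lt_of_lt_of_le hlt (A.min'_le b hb)))
        rw [if_neg hiA, this]; simp
      rw [hflp, hsg, one_smul, prodS_insert_min (fun b hb => le_of_lt (lt_of_lt_of_le hlt (A.min'_le b hb))) hiA]
    · -- i = a₀
      rw [heq]
      have hflp : flp a₀ A = A₀ := if_pos ha₀A
      have hsg : sg a₀ A = -1 := by
        unfold sg
        have : A.filter (· < a₀) = ∅ := by
          apply Finset.filter_eq_empty_iff.2
          intro b hb
          exact not_lt.2 (A.min'_le b hb)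
        rw [if_pos ha₀A, this]; simp
      rw [hflp, hsg, hprod, ← mul_assoc, iota_sq hψ, neg_one_smul, neg_mul, one_mul]
    · -- a₀ < i
      have hne : i ≠ a₀ := ne_of_gt hgt
      have key := ih A₀ hsub i
      rw [hprod, ← mul_assoc, iota_anticomm hψ hne, neg_mul, mul_assoc, key,
        mul_smul_comm, ← neg_smul]
      have h2 : prodS ψ (insert a₀ (flp i A₀)) = ι (Qf m) (ψ a₀) * prodS ψ (flp i A₀) := by
        apply prodS_insert_min
        · intro b hb
          rcases eq_or_ne b i with rfl | hbi
          · exact le_of_lt hgt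
          · exact hmin b ((mem_flp_ne hbi).1 hb)
        · intro hmem
          exact (mem_flp_ne hne.symm).1 hmem |> hA₀
      rw [← h2, hAeq, flp_insert_ne hne, sg_insert_lt hgt hA₀]
end MulProd
section Signs
variable {m : ℕ}

lemma filter_flp_of_le {i k : Fin m} (h : ¬ k < i) (A : Finset (Fin m)) :
    (flp k A).filter (· < i) = A.filter (· < i) := by
  unfold flp
  by_cases hk : k ∈ A
  · rw [if_pos hk, Finset.filter_erase, Finset.erase_eq_of_notMem]
    intro hm
    exact h (Finset.mem_filter.1 hm).2
  · rw [if_neg hk, Finset.filter_insert, if_neg h]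

lemma pow_filter_flp_of_lt {i j : Fin m} (h : i < j) (A : Finset (Fin m)) :
    ((-1:ℝ)) ^ (((flp i A).filter (· < j)).card) = -((-1:ℝ)) ^ ((A.filter (· < j)).card) := by
  unfold flp
  by_cases hi : i ∈ A
  · rw [if_pos hi, Finset.filter_erase]
    have hm : i ∈ A.filter (· < j) := Finset.mem_filter.2 ⟨hi, h⟩
    have hc : (A.filter (· < j)).card = ((A.filter (· < j)).erase i).card + 1 := by
      rw [Finset.card_erase_of_mem hm]
      have : 1 ≤ (A.filter (· < j)).card := Finset.card_pos.2 ⟨i, hm⟩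
      omega
    rw [hc, pow_succ]
    ring
  · rw [if_neg hi, Finset.filter_insert, if_pos h,
      Finset.card_insert_of_notMem (fun hm => hi (Finset.mem_filter.1 hm).1), pow_succ]
    ring

lemma sg_flp_lt_self {i j : Fin m} (h : i < j) (A : Finset (Fin m)) :
    sg i (flp i (flp j A)) = - sg i A := by
  have hne : i ≠ j := ne_of_lt h
  have hmem : i ∈ flp i (flp j A) ↔ i ∉ A := by
    rw [mem_flp_self, mem_flp_ne hne]
  have hfil : (flp i (flp j A)).filter (· < i) = A.filter (· < i) := by
    rw [filter_flp_of_le (lt_irrefl i), filter_flp_of_le (fun hc => absurd (lt_trans h hc) (lt_irrefl i))]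
  unfold sg
  rw [hfil]
  by_cases hi : i ∈ A
  · rw [if_pos hi, if_neg (by rw [hmem]; exact fun hc => hc hi)]; ring
  · rw [if_neg hi, if_pos (hmem.2 hi)]; ring

lemma sg_flp_lt_other {i j : Fin m} (h : i < j) (A : Finset (Fin m)) :
    sg j (flp i (flp j A)) = sg j A := by
  have hne : j ≠ i := ne_of_gt h
  have hmem : j ∈ flp i (flp j A) ↔ j ∉ A := by
    rw [mem_flp_ne hne, mem_flp_self]
  have hpow : ((-1:ℝ)) ^ (((flp i (flp j A)).filter (· < j)).card)
      = -((-1:ℝ)) ^ ((A.filter (· < j)).card) := by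
    rw [pow_filter_flp_of_lt h, filter_flp_of_le (lt_irrefl j)]
  unfold sg
  rw [hpow]
  by_cases hj : j ∈ A
  · rw [if_pos hj, if_neg (by rw [hmem]; exact fun hc => hc hj)]; ring
  · rw [if_neg hj, if_pos (hmem.2 hj)]; ring

lemma sg_pair {i j : Fin m} (h : i ≠ j) (A : Finset (Fin m)) :
    sg j (flp i (flp j A)) * sg i (flp i (flp j A)) = -(sg i A * sg j A) := by
  rcases h.lt_or_gt with hlt | hgt
  · rw [sg_flp_lt_self hlt, sg_flp_lt_other hlt]; ring
  · rw [flp_comm h]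
    rw [sg_flp_lt_self hgt, sg_flp_lt_other hgt]; ring
end Signs

end B0

section Key
variable {m : ℕ} {φ ψ : Fin m → (Fin m → ℝ)}

lemma rev_prodS_mul (hψ : IsStructuralSet ψ) (A : Finset (Fin m)) (j : Fin m) :
    reverse (Q := Qf m) (prodS ψ A) * ι (Qf m) (ψ j)
      = sg j A • reverse (Q := Qf m) (prodS ψ (flp j A)) := by
  rw [← reverse_ι (Q := Qf m) (ψ j), ← reverse.map_mul, mul_prodS hψ A j, map_smul]

lemma sandwich_term (hφ : IsStructuralSet φ) (hψ : IsStructuralSet ψ)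
    (i j : Fin m) (A : Finset (Fin m)) (a : Cl m) :
    ι (Qf m) (φ i) * (prodS φ A * a * reverse (prodS ψ A)) * ι (Qf m) (ψ j)
      = (sg i A * sg j A) • (prodS φ (flp i A) * a * reverse (prodS ψ (flp j A))) := by
  have h1 : ι (Qf m) (φ i) * (prodS φ A * a * reverse (prodS ψ A)) * ι (Qf m) (ψ j)
      = (ι (Qf m) (φ i) * prodS φ A) * a * (reverse (prodS ψ A) * ι (Qf m) (ψ j)) := by
    simp only [mul_assoc]
  rw [h1, mul_prodS hφ A i, rev_prodS_mul hψ A j, smul_mul_assoc, smul_mul_assoc,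
    mul_smul_comm, smul_smul]

lemma p_flp_card (p : ℕ → Prop) (hp : ∀ n, p (n + 1) ↔ ¬ p n)
    (i : Fin m) (A : Finset (Fin m)) : p ((flp i A).card) ↔ ¬ p A.card := by
  by_cases h : i ∈ A
  · have hc : A.card = (flp i A).card + 1 := by
      unfold flp
      rw [if_pos h, Finset.card_erase_of_mem h]
      have : 1 ≤ A.card := Finset.card_pos.2 ⟨i, h⟩
      omega
    rw [hc] at *
    rw [iff_not_comm]
    exact hp _
  · have hc : (flp i A).card = A.card + 1 := by
      unfold flp; rw [if_neg h, Finset.card_insert_of_notMem h]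
    rw [hc]; exact hp _

lemma key_vanish (hφ : IsStructuralSet φ) (hψ : IsStructuralSet ψ)
    (p : ℕ → Prop) [DecidablePred p] (hp : ∀ n, p (n + 1) ↔ ¬ p n)
    (a : Fin m → Fin m → Cl m) (hsym : ∀ i j, a i j = a j i)
    (htr : (∑ i, a i i) = 0) :
    ∑ i, ∑ j, ι (Qf m) (φ i) *
      (∑ A ∈ Finset.univ.filter (fun A : Finset (Fin m) => p A.card),
        prodS φ A * a i j * reverse (prodS ψ A)) * ι (Qf m) (ψ j) = 0 := by
  classical
  set S : Finset (Finset (Fin m)) := Finset.univ.filter (fun A : Finset (Fin m) => p A.card)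
    with hS
  set g : Fin m → Fin m → Cl m := fun i j => ι (Qf m) (φ i) *
      (∑ A ∈ S, prodS φ A * a i j * reverse (prodS ψ A)) * ι (Qf m) (ψ j) with hg
  have hgrep : ∀ i j, g i j = ∑ A ∈ S,
      (sg i A * sg j A) • (prodS φ (flp i A) * a i j * reverse (prodS ψ (flp j A))) := by
    intro i j
    simp only [hg]
    rw [Finset.mul_sum, Finset.sum_mul]
    exact Finset.sum_congr rfl fun A _ => sandwich_term hφ hψ i j A (a i j)
  -- diagonal vanishes
  have hdiag : ∑ i, g i i = 0 := by
    have h1 : ∀ i, g i i = ∑ B ∈ Finset.univ.filter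
        (fun B : Finset (Fin m) => ¬ p B.card),
        prodS φ B * a i i * reverse (prodS ψ B) := by
      intro i
      rw [hgrep i i]
      refine Finset.sum_nbij' (fun A => flp i A) (fun B => flp i B) ?_ ?_ ?_ ?_ ?_
      · intro A hA
        simp only [hS, Finset.mem_filter, Finset.mem_univ, true_and] at hA ⊢
        exact fun hc => (p_flp_card p hp i A).1 hc hA
      · intro B hB
        simp only [hS, Finset.mem_filter, Finset.mem_univ, true_and] at hB ⊢
        exact (p_flp_card p hp i B).2 hB
      · intro A _; exact flp_flp_self i A
      · intro B _; exact flp_flp_self i B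
      · intro A _
        rw [sg_mul_self, one_smul]
    rw [Finset.sum_congr rfl fun i _ => h1 i, Finset.sum_comm]
    refine Finset.sum_eq_zero fun B _ => ?_
    have : ∑ i, prodS φ B * a i i * reverse (prodS ψ B)
        = (prodS φ B * (∑ i, a i i)) * reverse (prodS ψ B) := by
      rw [Finset.mul_sum, Finset.sum_mul]
    rw [this, htr, mul_zero, zero_mul]
  -- antisymmetry off the diagonal
  have hanti : ∀ i j, i ≠ j → g j i = - g i j := by
    intro i j hij
    rw [hgrep j i, hgrep i j]
    rw [← Finset.sum_neg_distrib]
    refine Finset.sum_nbij' (fun A => flp i (flp j A)) (fun A => flp i (flp j A)) ?_ ?_ ?_ ?_ ?_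
    · intro A hA
      simp only [hS, Finset.mem_filter, Finset.mem_univ, true_and] at hA ⊢
      exact (p_flp_card p hp i (flp j A)).2 (fun hc => (p_flp_card p hp j A).1 hc hA)
    · intro A hA
      simp only [hS, Finset.mem_filter, Finset.mem_univ, true_and] at hA ⊢
      exact (p_flp_card p hp i (flp j A)).2 (fun hc => (p_flp_card p hp j A).1 hc hA)
    · intro A _
      show flp i (flp j (flp i (flp j A))) = A
      rw [← flp_comm hij (flp j A), flp_flp_self j A]
      exact flp_flp_self i A
    · intro A _
      show flp i (flp j (flp i (flp j A))) = A
      rw [← flp_comm hij (flp j A), flp_flp_self j A]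
      exact flp_flp_self i A
    · intro A _
      show (sg j A * sg i A) • (prodS φ (flp j A) * a j i * reverse (prodS ψ (flp i A)))
        = -((sg i (flp i (flp j A)) * sg j (flp i (flp j A))) •
            (prodS φ (flp i (flp i (flp j A))) * a i j *
              reverse (prodS ψ (flp j (flp i (flp j A))))))
      have e1 : flp j (flp i (flp j A)) = flp i A := by
        rw [flp_comm hij.symm (flp j A), flp_flp_self]
      have e2 : flp i (flp i (flp j A)) = flp j A := flp_flp_self i _
      rw [e1, e2, hsym j i, ← neg_smul]
      congr 1
      linear_combination sg_pair hij A
  -- off-diagonal part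
  have hoff : ∑ i, ∑ j ∈ Finset.univ.erase i, g i j = 0 := by
    set T := ∑ i, ∑ j ∈ Finset.univ.erase i, g i j with hT
    have h2 : T = -T := by
      nth_rewrite 2 [hT]
      have hswap : ∑ i, ∑ j ∈ Finset.univ.erase i, g i j
          = ∑ j, ∑ i ∈ Finset.univ.erase j, g i j := by
        refine Finset.sum_comm' ?_
        intro x y
        simp only [Finset.mem_univ, Finset.mem_erase, true_and, and_true, ne_eq]
        exact ⟨fun h h' => h h'.symm, fun h h' => h h'.symm⟩
      rw [hswap, ← Finset.sum_neg_distrib]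
      refine Finset.sum_congr rfl fun j _ => ?_
      rw [← Finset.sum_neg_distrib]
      refine Finset.sum_congr rfl fun i hi => ?_
      have hij : i ≠ j := (Finset.mem_erase.1 hi).1
      rw [hanti j i hij.symm, neg_neg]
    have h3 : T + T = 0 := by nth_rewrite 2 [h2]; exact add_neg_cancel T
    have h4 : (2 : ℝ) • T = 0 := by rw [two_smul]; exact h3
    have := smul_eq_zero.1 h4
    rcases this with h | h
    · norm_num at h
    · exact h
  have hsplit : ∀ i, ∑ j, g i j = g i i + ∑ j ∈ Finset.univ.erase i, g i j := by
    intro i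
    exact (Finset.add_sum_erase _ _ (Finset.mem_univ i)).symm
  calc ∑ i, ∑ j, g i j = ∑ i, (g i i + ∑ j ∈ Finset.univ.erase i, g i j) :=
        Finset.sum_congr rfl fun i _ => hsplit i
    _ = (∑ i, g i i) + ∑ i, ∑ j ∈ Finset.univ.erase i, g i j := Finset.sum_add_distrib
    _ = 0 := by rw [hdiag, hoff, add_zero]
end Key

section Final
variable {m : ℕ} {φ ψ : Fin m → (Fin m → ℝ)}

lemma Psi_filter (hp0 : True) (p : ℕ → Prop) [DecidablePred p] (a : Cl m) :
    ∑ k ∈ (Finset.range (m + 1)).filter p, PsiK φ ψ k a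
      = ∑ A ∈ Finset.univ.filter (fun A : Finset (Fin m) => p A.card),
          prodS φ A * a * reverse (prodS ψ A) := by
  have hmaps : ∀ A ∈ Finset.univ.filter (fun A : Finset (Fin m) => p A.card),
      A.card ∈ (Finset.range (m + 1)).filter p := by
    intro A hA
    simp only [Finset.mem_filter, Finset.mem_univ, true_and, Finset.mem_range] at hA ⊢
    exact ⟨Nat.lt_succ_of_le (by simpa using Finset.card_le_univ A), hA⟩
  rw [← Finset.sum_fiberwise_of_maps_to hmaps
    (fun A => prodS φ A * a * reverse (prodS ψ A))]
  refine Finset.sum_congr rfl fun k hk => ?_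
  rw [PsiK]
  refine Finset.sum_congr ?_ fun A _ => rfl
  have hpk : p k := (Finset.mem_filter.1 hk).2
  ext A
  simp only [Finset.mem_filter, Finset.mem_univ, true_and]
  constructor
  · exact fun h => ⟨h ▸ hpk, h⟩
  · exact fun h => h.2

lemma pd_symm {F : (Fin m → ℝ) → Coef m} {Ω : Set (Fin m → ℝ)} (hΩo : IsOpen Ω)
    (hF : ContDiffOn ℝ 2 F Ω) {x : Fin m → ℝ} (hx : x ∈ Ω) (i j : Fin m) :
    pd i (pd j F) x = pd j (pd i F) x := by
  have hFx : ContDiffAt ℝ 2 F x := hF.contDiffAt (hΩo.mem_nhds hx)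
  have hsymm := hFx.isSymmSndFDerivAt (by simp)
  have hd : DifferentiableAt ℝ (fderiv ℝ F) x :=
    (hFx.fderiv_right (m := 1) (by norm_num)).differentiableAt one_ne_zero
  have hcl : ∀ w : Fin m → ℝ, fderiv ℝ (fun y => fderiv ℝ F y w) x
      = (fderiv ℝ (fderiv ℝ F) x).flip w := by
    intro w
    have := fderiv_clm_apply (c := fderiv ℝ F) (u := fun _ => w) hd (differentiableAt_const w)
    simpa using this
  show fderiv ℝ (fun y => fderiv ℝ F y (Pi.single j 1)) x (Pi.single i 1)
    = fderiv ℝ (fun y => fderiv ℝ F y (Pi.single i 1)) x (Pi.single j 1)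
  rw [hcl, hcl, ContinuousLinearMap.flip_apply, ContinuousLinearMap.flip_apply]
  exact hsymm _ _


/-- if `f` is harmonic on a domain `Ω` then `Ψ₊^{φ,ψ}(f)` and
`Ψ₋^{φ,ψ}(f)` are both harmonic and `(φ,ψ)`-inframonogenic on `Ω`. (By linearity
of `Ψ_±`, `Δ(Ψ_± f) = Ψ_±(Δf)` and `φ∂[Ψ_± f]ψ∂ = Σᵢⱼ φⁱ Ψ_±(∂²f/∂xᵢ∂xⱼ) ψʲ`.) -/
theorem harmonic_psiPlusMinus {m : ℕ} (φ ψ : Fin m → (Fin m → ℝ))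
    (hφ : IsStructuralSet φ) (hψ : IsStructuralSet ψ)
    (Ω : Set (Fin m → ℝ)) (hΩo : IsOpen Ω) (hΩc : IsConnected Ω)
    (F : (Fin m → ℝ) → Coef m) (hF : ContDiffOn ℝ 2 F Ω)
    (hharm : ∀ x ∈ Ω, lapD F x = 0) :
    (∀ x ∈ Ω, PsiPlus φ ψ (lapD F x) = 0) ∧
    (∀ x ∈ Ω, PsiMinus φ ψ (lapD F x) = 0) ∧
    (∀ x ∈ Ω,
      (∑ i, ∑ j, ι (Qf m) (φ i) * PsiPlus φ ψ (toCl (pd i (pd j F) x)) * ι (Qf m) (ψ j))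
        = 0) ∧
    (∀ x ∈ Ω,
      (∑ i, ∑ j, ι (Qf m) (φ i) * PsiMinus φ ψ (toCl (pd i (pd j F) x)) * ι (Qf m) (ψ j))
        = 0) := by
  have hsym : ∀ x ∈ Ω, ∀ i j : Fin m,
      toCl (pd i (pd j F) x) = toCl (pd j (pd i F) x) :=
    fun x hx i j => congrArg toCl (pd_symm hΩo hF hx i j)
  have htr : ∀ x ∈ Ω, (∑ i, toCl (pd i (pd i F) x)) = 0 := fun x hx => hharm x hx
  have hPp : ∀ b : Cl m, PsiPlus φ ψ b = ∑ A ∈ Finset.univ.filter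
      (fun A : Finset (Fin m) => Even A.card), prodS φ A * b * reverse (prodS ψ A) :=
    fun b => Psi_filter trivial (fun n => Even n) b
  have hPm : ∀ b : Cl m, PsiMinus φ ψ b = ∑ A ∈ Finset.univ.filter
      (fun A : Finset (Fin m) => Odd A.card), prodS φ A * b * reverse (prodS ψ A) :=
    fun b => Psi_filter trivial (fun n => Odd n) b
  refine ⟨?_, ?_, ?_, ?_⟩
  · intro x hx; rw [hharm x hx]; simp [PsiPlus, PsiK]
  · intro x hx; rw [hharm x hx]; simp [PsiMinus, PsiK]
  · intro x hx
    simp only [hPp]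
    exact key_vanish hφ hψ (fun n => Even n) (fun n => Nat.even_add_one)
      (fun i j => toCl (pd i (pd j F) x)) (hsym x hx) (htr x hx)
  · intro x hx
    simp only [hPm]
    refine key_vanish hφ hψ (fun n => Odd n) (fun n => ?_)
      (fun i j => toCl (pd i (pd j F) x)) (hsym x hx) (htr x hx)
    show Odd (n + 1) ↔ ¬ Odd n
    rw [Nat.odd_add_one]
end Final
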